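/- With ψ̃_n = ρ_{h/10} * ψ_n as defined in the context, let 𝒦 = {1−K, −1, 0, 1, K−1}². Suppose α, β ∈ {1,…,K}² with n = α₁ + (α₂−1)K and m = β₁ + (β₂−1)K, and suppose β − α ∉ 𝒦. Then ∫_{[0,L]²} ∇ψ̃_n(x) · ∇ψ̃_m(x) dx = 0. -/

import Mathlib

open MeasureTheory Real

noncomputable section

/-- The plane `ℝ²` with the Euclidean norm. -/
abbrev E2 := EuclideanSpace ℝ (Fin 2)

/-- The standard mollifier bump `ρ(z) = K₀ exp(1/(1-|z|²))` for `|z| < 1`, `0` otherwise. -/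
def rho (K0 : ℝ) (z : E2) : ℝ :=
  if ‖z‖ < 1 then K0 * Real.exp (1 / (1 - ‖z‖ ^ 2)) else 0

/-- Rescaled mollifier `ρ_ε(x) = ε⁻² ρ(x/ε)`. -/
def rhoEps (K0 ε : ℝ) (x : E2) : ℝ := (ε ^ 2)⁻¹ * rho K0 (ε⁻¹ • x)

/-- The half-open square `Q = [(i−1)h, ih) × [(j−1)h, jh)`. -/
def sqr (h : ℝ) (i j : ℕ) : Set E2 :=
  {x | x 0 ∈ Set.Ico (((i : ℝ) - 1) * h) ((i : ℝ) * h) ∧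
       x 1 ∈ Set.Ico (((j : ℝ) - 1) * h) ((j : ℝ) * h)}

/-- The lattice vector `(k₁ L, k₂ L)`. -/
def latticeVec (L : ℝ) (k : ℤ × ℤ) : E2 :=
  (WithLp.equiv 2 (Fin 2 → ℝ)).symm ![(k.1 : ℝ) * L, (k.2 : ℝ) * L]

/-- The `L`-periodized indicator `ψ(x) = ∑_{k∈ℤ²} χ_Q(x + kL)`. -/
def psi (L h : ℝ) (i j : ℕ) (x : E2) : ℝ :=
  ∑' k : ℤ × ℤ, (sqr h i j).indicator 1 (x + latticeVec L k)

/-- The mollified bump `ψ̃ = ρ_{h/10} * ψ`. -/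
def psiT (K0 L h : ℝ) (i j : ℕ) (x : E2) : ℝ :=
  ∫ y, rhoEps K0 (h / 10) (x - y) * psi L h i j y

/-- The fundamental domain `[0,L]²`. -/
def DIcc (L : ℝ) : Set E2 := {x | x 0 ∈ Set.Icc 0 L ∧ x 1 ∈ Set.Icc 0 L}

/-- The half-open fundamental domain `[0,L)²`. -/
def DIco (L : ℝ) : Set E2 := {x | x 0 ∈ Set.Ico 0 L ∧ x 1 ∈ Set.Ico 0 L}

/-- Proposition 2.4 (ii): if `β − α ∉ 𝒦 = {1−K, −1, 0, 1, K−1}²` then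
`∫_{[0,L]²} ∇ψ̃ₙ(x) · ∇ψ̃ₘ(x) dx = 0`, where `n = α₁ + (α₂−1)K` and `m = β₁ + (β₂−1)K`. -/
lemma abs_coord_le_norm (x : E2) (c : Fin 2) : |x c| ≤ ‖x‖ := by
  rw [EuclideanSpace.norm_eq, ← Real.sqrt_sq_eq_abs]
  apply Real.sqrt_le_sqrt
  have := Finset.single_le_sum (f := fun i => ‖x i‖ ^ 2) (fun i _ => sq_nonneg _)
    (Finset.mem_univ c)
  simpa [Real.norm_eq_abs, sq_abs] using this

lemma latticeVec_apply0 (L : ℝ) (k : ℤ × ℤ) : latticeVec L k 0 = (k.1 : ℝ) * L := by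
  simp [latticeVec, WithLp.equiv_symm_apply]

lemma latticeVec_apply1 (L : ℝ) (k : ℤ × ℤ) : latticeVec L k 1 = (k.2 : ℝ) * L := by
  simp [latticeVec, WithLp.equiv_symm_apply]

lemma psiT_eq_zero (K0 L h : ℝ) (hh0 : 0 < h) (i j : ℕ) (x : E2)
    (hfar : ∀ y : E2, (∃ k : ℤ × ℤ, y + latticeVec L k ∈ sqr h i j) → h / 10 ≤ ‖x - y‖) :
    psiT K0 L h i j x = 0 := by
  have heps : (0:ℝ) < h / 10 := by linarith
  have hz : ∀ y : E2, rhoEps K0 (h / 10) (x - y) * psi L h i j y = 0 := by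
    intro y
    by_cases hy : ∃ k : ℤ × ℤ, y + latticeVec L k ∈ sqr h i j
    · have h1 : h / 10 ≤ ‖x - y‖ := hfar y hy
      have hnot : ¬ ‖(h / 10)⁻¹ • (x - y)‖ < 1 := by
        rw [not_lt, norm_smul, Real.norm_eq_abs, abs_inv, abs_of_pos heps,
          ← div_eq_inv_mul, le_div_iff₀ heps]
        linarith
      unfold rhoEps rho
      rw [if_neg hnot]
      ring
    · have hterm : ∀ k : ℤ × ℤ,
          (sqr h i j).indicator (1 : E2 → ℝ) (y + latticeVec L k) = 0 := fun k =>
        Set.indicator_of_notMem (fun hmem => hy ⟨k, hmem⟩) _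
      have hpsi : psi L h i j y = 0 := by
        unfold psi
        rw [tsum_congr hterm, tsum_zero]
      rw [hpsi, mul_zero]
  unfold psiT
  rw [show (fun y => rhoEps K0 (h / 10) (x - y) * psi L h i j y) = fun _ => (0:ℝ) from
    funext hz]
  exact integral_zero _ _

lemma gradient_psiT_eq_zero (K0 L h : ℝ) (hh0 : 0 < h) (i j : ℕ) (x : E2)
    (hfar : ∀ x' ∈ Metric.ball x (h / 10), psiT K0 L h i j x' = 0) :
    gradient (psiT K0 L h i j) x = 0 := by
  have hev : psiT K0 L h i j =ᶠ[nhds x] (fun _ => (0:ℝ)) := by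
    filter_upwards [Metric.ball_mem_nhds x (by linarith : (0:ℝ) < h / 10)] with x' hx'
    exact hfar x' hx'
  rw [hev.gradient_eq]
  exact gradient_const x (0:ℝ)

def FarIco (L h : ℝ) (a : ℕ) (t : ℝ) : Prop :=
  ∀ s : ℝ, (∃ k : ℤ, s + (k : ℝ) * L ∈ Set.Ico (((a : ℝ) - 1) * h) ((a : ℝ) * h)) →
    h / 5 ≤ |t - s|

lemma far_dichotomy (L h : ℝ) (K : ℕ) (hh0 : 0 < h) (hLK : L = (K : ℝ) * h)
    (a b : ℕ) (ha1 : 1 ≤ a) (ha2 : a ≤ K) (hb1 : 1 ≤ b) (hb2 : b ≤ K)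
    (hc : ((b : ℤ) - (a : ℤ)) ∉ ({1 - (K : ℤ), -1, 0, 1, (K : ℤ) - 1} : Set ℤ)) (t : ℝ) :
    FarIco L h a t ∨ FarIco L h b t := by
  by_contra hcon
  push_neg at hcon
  obtain ⟨h1, h2⟩ := hcon
  unfold FarIco at h1 h2
  push_neg at h1 h2
  obtain ⟨s, ⟨k, hka, hkb⟩, hs⟩ := h1
  obtain ⟨s', ⟨k', hka', hkb'⟩, hs'⟩ := h2
  rw [abs_lt] at hs hs'
  rw [hLK] at hka hkb hka' hkb'
  set M : ℤ := ((b : ℤ) - a) + (k - k') * K with hMdef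
  have hMr : (M : ℝ) = (b : ℝ) - a + ((k : ℝ) - k') * K := by push_cast [hMdef]; ring
  have key1 : ((M : ℝ) - 1) * h < (2/5) * h := by
    rw [hMr]; nlinarith [hs.1, hs.2, hs'.1, hs'.2, hka', hkb]
  have key2 : (-(2/5 : ℝ)) * h < ((M : ℝ) + 1) * h := by
    rw [hMr]; nlinarith [hs.1, hs.2, hs'.1, hs'.2, hka, hkb']
  have hub : (M : ℝ) < 2 := by
    have := (mul_lt_mul_iff_of_pos_right hh0).mp key1; linarith
  have hlb : (-2 : ℝ) < (M : ℝ) := by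
    have := (mul_lt_mul_iff_of_pos_right hh0).mp key2; linarith
  have hM1 : M ≤ 1 := by
    have : M < 2 := by exact_mod_cast hub
    omega
  have hM2 : -1 ≤ M := by
    have : (-2 : ℤ) < M := by exact_mod_cast hlb
    omega
  simp only [Set.mem_insert_iff, Set.mem_singleton_iff, not_or] at hc
  obtain ⟨hc1, hc2, hc3, hc4, hc5⟩ := hc
  rcases lt_trichotomy (k - k') 0 with hj | hj | hj
  · have hjK : (k - k') * (K : ℤ) ≤ -K := by
      have h1 : k - k' ≤ -1 := by omega
      have := mul_le_mul_of_nonneg_right h1 (by positivity : (0:ℤ) ≤ (K:ℤ))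
      linarith
    have hd : (K : ℤ) - 1 ≤ (b : ℤ) - a := by
      have : M = ((b : ℤ) - a) + (k - k') * K := hMdef
      linarith
    omega
  · have : M = (b : ℤ) - a := by rw [hMdef, hj]; ring
    omega
  · have hjK : (K : ℤ) ≤ (k - k') * (K : ℤ) := by
      have h1 : 1 ≤ k - k' := by omega
      have := mul_le_mul_of_nonneg_right h1 (by positivity : (0:ℤ) ≤ (K:ℤ))
      linarith
    have hd : (b : ℤ) - a ≤ 1 - K := by
      have : M = ((b : ℤ) - a) + (k - k') * K := hMdef
      linarith
    omega

lemma grad_zero0 (K0 L h : ℝ) (hh0 : 0 < h) (i j : ℕ) (x : E2)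
    (hF : FarIco L h i (x 0)) : gradient (psiT K0 L h i j) x = 0 := by
  apply gradient_psiT_eq_zero K0 L h hh0 i j x
  intro x' hx'
  apply psiT_eq_zero K0 L h hh0
  rintro y ⟨k, hky⟩
  have hk0 : y 0 + (k.1 : ℝ) * L ∈ Set.Ico (((i : ℝ) - 1) * h) ((i : ℝ) * h) := by
    have := hky.1
    simpa [PiLp.add_apply, latticeVec_apply0] using this
  have h5 : h / 5 ≤ |x 0 - y 0| := hF (y 0) ⟨k.1, hk0⟩
  have t1 : |x 0 - x' 0| ≤ ‖x - x'‖ := by simpa using abs_coord_le_norm (x - x') 0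
  have t2 : |x' 0 - y 0| ≤ ‖x' - y‖ := by simpa using abs_coord_le_norm (x' - y) 0
  have hb : ‖x - x'‖ < h / 10 := by
    rw [← dist_eq_norm, dist_comm]
    exact Metric.mem_ball.mp hx'
  have tri : |x 0 - y 0| ≤ |x 0 - x' 0| + |x' 0 - y 0| := abs_sub_le _ _ _
  linarith

lemma grad_zero1 (K0 L h : ℝ) (hh0 : 0 < h) (i j : ℕ) (x : E2)
    (hF : FarIco L h j (x 1)) : gradient (psiT K0 L h i j) x = 0 := by
  apply gradient_psiT_eq_zero K0 L h hh0 i j x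
  intro x' hx'
  apply psiT_eq_zero K0 L h hh0
  rintro y ⟨k, hky⟩
  have hk0 : y 1 + (k.2 : ℝ) * L ∈ Set.Ico (((j : ℝ) - 1) * h) ((j : ℝ) * h) := by
    have := hky.2
    simpa [PiLp.add_apply, latticeVec_apply1] using this
  have h5 : h / 5 ≤ |x 1 - y 1| := hF (y 1) ⟨k.2, hk0⟩
  have t1 : |x 1 - x' 1| ≤ ‖x - x'‖ := by simpa using abs_coord_le_norm (x - x') 1
  have t2 : |x' 1 - y 1| ≤ ‖x' - y‖ := by simpa using abs_coord_le_norm (x' - y) 1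
  have hb : ‖x - x'‖ < h / 10 := by
    rw [← dist_eq_norm, dist_comm]
    exact Metric.mem_ball.mp hx'
  have tri : |x 1 - y 1| ≤ |x 1 - x' 1| + |x' 1 - y 1| := abs_sub_le _ _ _
  linarith

theorem psiT_gradient_almost_orthogonal (L : ℝ) (hL : 0 < L) (K : ℕ) (hK : 0 < K)
    (h : ℝ) (hh : h = L / K) (K0 : ℝ) (hK0pos : 0 < K0) (hK0 : (∫ z, rho K0 z) = 1)
    (α β : ℕ × ℕ) (hα1 : α.1 ∈ Finset.Icc 1 K) (hα2 : α.2 ∈ Finset.Icc 1 K)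
    (hβ1 : β.1 ∈ Finset.Icc 1 K) (hβ2 : β.2 ∈ Finset.Icc 1 K)
    (hsep : ((β.1 : ℤ) - (α.1 : ℤ), (β.2 : ℤ) - (α.2 : ℤ)) ∉
      (({1 - (K : ℤ), -1, 0, 1, (K : ℤ) - 1} : Set ℤ) ×ˢ
       ({1 - (K : ℤ), -1, 0, 1, (K : ℤ) - 1} : Set ℤ))) :
    (∫ x in DIcc L, inner (𝕜 := ℝ)
        (gradient (psiT K0 L h α.1 α.2) x) (gradient (psiT K0 L h β.1 β.2) x)) = 0 := by
  simp only [Finset.mem_Icc] at hα1 hα2 hβ1 hβ2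
  have hKpos : (0:ℝ) < (K : ℝ) := by exact_mod_cast hK
  have hh0 : 0 < h := by rw [hh]; positivity
  have hLK : L = (K : ℝ) * h := by rw [hh]; field_simp
  rw [Set.mem_prod, not_and_or] at hsep
  have key : ∀ x : E2,
      gradient (psiT K0 L h α.1 α.2) x = 0 ∨ gradient (psiT K0 L h β.1 β.2) x = 0 := by
    intro x
    rcases hsep with hc | hc
    · rcases far_dichotomy L h K hh0 hLK α.1 β.1 hα1.1 hα1.2 hβ1.1 hβ1.2 hc (x 0)
        with hF | hF
      · exact Or.inl (grad_zero0 K0 L h hh0 α.1 α.2 x hF)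
      · exact Or.inr (grad_zero0 K0 L h hh0 β.1 β.2 x hF)
    · rcases far_dichotomy L h K hh0 hLK α.2 β.2 hα2.1 hα2.2 hβ2.1 hβ2.2 hc (x 1)
        with hF | hF
      · exact Or.inl (grad_zero1 K0 L h hh0 α.1 α.2 x hF)
      · exact Or.inr (grad_zero1 K0 L h hh0 β.1 β.2 x hF)
  have hzero : ∀ x : E2, (inner (𝕜 := ℝ) (gradient (psiT K0 L h α.1 α.2) x)
      (gradient (psiT K0 L h β.1 β.2) x) : ℝ) = 0 := by
    intro x
    rcases key x with h0 | h0
    · rw [h0, inner_zero_left]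
    · rw [h0, inner_zero_right]
  simp only [hzero]
  exact integral_zero _ _
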